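/- Let n ≥ 3 and let x_i : ℂ^i → ℂ^{i+1} and y_i : ℂ^{i+1} → ℂ^i, for 1 ≤ i ≤ n−2, be linear maps satisfying x_j ∘ y_j = y_{j+1} ∘ x_{j+1} (as maps ℂ^{j+1} → ℂ^{j+1}) for all 1 ≤ j ≤ n−3. Then for all indices 1 ≤ i < k ≤ n−2 and every v ∈ ker x_k, one has x_i ( y_i ( y_{i+1} ( ⋯ ( y_{k−1}(v) ) ⋯ ) ) ) = 0; that is, the composite x_i ∘ y_i ∘ y_{i+1} ∘ ⋯ ∘ y_{k−1} vanishes on ker x_k. Consequently, the graded subspace with component ker x_k at vertex k and component y_i∘⋯∘y_{k−1}(ker x_k) at each vertex i < k is invariant under all the maps x_i, y_i. -/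
import Mathlib

/-- The composite `y_i ∘ y_{i+1} ∘ ⋯ ∘ y_{i+d−1} : ℂ^{i+d} → ℂ^i` of the downward stem
maps (equal to `id` when `d = 0`). -/
noncomputable def yChain (y : ∀ i : ℕ, (Fin (i+1) → ℂ) →ₗ[ℂ] (Fin i → ℂ)) (i : ℕ) :
    ∀ d : ℕ, (Fin (i + d) → ℂ) →ₗ[ℂ] (Fin i → ℂ)
  | 0 => LinearMap.id
  | d + 1 => (yChain y i d).comp (y (i + d))

/-- Reindexing linear map `(Fin a → ℂ) → (Fin b → ℂ)` induced by `a = b`. -/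
noncomputable def fcast {a b : ℕ} (h : a = b) : (Fin a → ℂ) →ₗ[ℂ] (Fin b → ℂ) :=
  LinearMap.funLeft ℂ ℂ (Fin.cast h.symm)

lemma fcast_self {a : ℕ} (h : a = a) (v : Fin a → ℂ) : fcast h v = v := by
  funext j
  simp [fcast, LinearMap.funLeft_apply, Fin.cast]

lemma ycast (y : ∀ i : ℕ, (Fin (i+1) → ℂ) →ₗ[ℂ] (Fin i → ℂ)) {a b : ℕ}
    (h0 : a = b) (h : a + 1 = b + 1) (v : Fin (a+1) → ℂ) :
    y b (fcast h v) = fcast h0 (y a v) := by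
  subst h0
  rw [fcast_self, fcast_self]

lemma xcast (x : ∀ i : ℕ, (Fin i → ℂ) →ₗ[ℂ] (Fin (i+1) → ℂ)) {a b : ℕ}
    (h : a = b) (v : Fin a → ℂ) (hv : x a v = 0) : x b (fcast h v) = 0 := by
  subst h
  rwa [fcast_self]

lemma yChain_cons (y : ∀ i : ℕ, (Fin (i+1) → ℂ) →ₗ[ℂ] (Fin i → ℂ)) :
    ∀ (e i : ℕ) (h : (i+1) + e = i + (e+1)) (v : Fin ((i+1) + e) → ℂ),
      yChain y i (e+1) (fcast h v) = y i (yChain y (i+1) e v) := by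
  intro e
  induction e with
  | zero =>
      intro i h v
      show y (i + 0) (fcast h v) = y i v
      rw [fcast_self]
      rfl
  | succ e ih =>
      intro i h v
      have h' : (i+1) + e = i + (e+1) := by omega
      show yChain y i (e+1) (y (i+(e+1)) (fcast h v)) =
        y i (yChain y (i+1) e (y ((i+1)+e) v))
      exact (congrArg (fun w => yChain y i (e+1) w) (ycast y h' h v)).trans
        (ih i h' (y ((i+1)+e) v))

/-- Let `n ≥ 3` and let `x_i : ℂ^i → ℂ^{i+1}`, `y_i : ℂ^{i+1} → ℂ^i`
(`1 ≤ i ≤ n−2`) satisfy `x_j ∘ y_j = y_{j+1} ∘ x_{j+1}` for `1 ≤ j ≤ n−3`.  Then for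
`1 ≤ i < k ≤ n−2` (written `k = i + d`, `d ≥ 1`) the composite `x_i ∘ y_i ∘ ⋯ ∘ y_{k−1}`
vanishes on `ker x_k`; consequently the graded subspace with component `ker x_k` at
vertex `k` and `y_i∘⋯∘y_{k−1}(ker x_k)` at each `i < k` is invariant under the `y`-maps
(the `x`-maps send each component to `0` by the first assertion). -/
theorem stmt5 (n : ℕ) (hn : 3 ≤ n)
    (x : ∀ i : ℕ, (Fin i → ℂ) →ₗ[ℂ] (Fin (i+1) → ℂ))
    (y : ∀ i : ℕ, (Fin (i+1) → ℂ) →ₗ[ℂ] (Fin i → ℂ))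
    (hrel : ∀ j, 1 ≤ j → j ≤ n - 3 → (x j).comp (y j) = (y (j+1)).comp (x (j+1))) :
    (∀ i d, 1 ≤ i → 1 ≤ d → i + d ≤ n - 2 →
      ∀ v ∈ LinearMap.ker (x (i + d)), x i (yChain y i d v) = 0) ∧
    (∀ i e, 1 ≤ i → (i + 1) + e ≤ n - 2 →
      Submodule.map (y i)
          (Submodule.map (yChain y (i+1) e) (LinearMap.ker (x ((i+1) + e)))) ≤
        Submodule.map (yChain y i (e+1)) (LinearMap.ker (x (i + (e+1))))) := by
  have Q : ∀ d i, 1 ≤ i → i + d ≤ n - 2 → ∀ v : Fin (i + d) → ℂ,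
      x (i + d) v = 0 → x i (yChain y i d v) = 0 := by
    intro d
    induction d with
    | zero => intro i _ _ v hv; exact hv
    | succ d ih =>
        intro i hi hle v hv
        have hxy : x (i + d) (y (i + d) v) = 0 := by
          have := congrArg (fun f => f v) (hrel (i + d) (by omega) (by omega))
          simp only [LinearMap.comp_apply] at this
          rw [this, show x (i + d + 1) v = 0 from hv, map_zero]
        exact ih i hi (by omega) (y (i + d) v) hxy
  refine ⟨fun i d hi _ hle v hv => Q d i hi hle v (LinearMap.mem_ker.mp hv), ?_⟩
  intro i e hi hle u hu
  obtain ⟨w, ⟨v, hv, rfl⟩, rfl⟩ := hu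
  have h : (i+1) + e = i + (e+1) := by omega
  exact ⟨fcast h v, LinearMap.mem_ker.mpr (xcast x h v (LinearMap.mem_ker.mp hv)),
    yChain_cons y e i h v⟩
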